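/- arXiv:1310.3248 — 6 statements merged into one kernel-verified Lean document; each statement's English description precedes it below -/
import Mathlib

section
/- For every l with 1 ≤ l ≤ L, the l-th smallest value of the final vector equals the (M+l)-th smallest element of U; that is, v'_l = u'_{M+l} for all l = 1,…,L. (In particular, the retained final values are exactly the L largest elements of U.) -/
private lemma ofFn_update_multiset (L : ℕ) (f : Fin L → ℝ) (i : Fin L) (x : ℝ) :
    (↑(List.ofFn (Function.update f i x)) : Multiset ℝ)
      = x ::ₘ (↑(List.ofFn f) : Multiset ℝ).erase (f i) := by
  classical
  have huniv : (Finset.univ : Finset (Fin L)).val = i ::ₘ (Finset.univ.erase i).val := by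
    conv_lhs => rw [← Finset.insert_erase (Finset.mem_univ i)]
    rw [Finset.insert_val_of_notMem (Finset.notMem_erase i _)]
  have h1 : ∀ g : Fin L → ℝ, (↑(List.ofFn g) : Multiset ℝ) = Multiset.map g Finset.univ.val := by
    intro g; rw [List.ofFn_eq_map]; rfl
  rw [h1, h1, huniv, Multiset.map_cons, Multiset.map_cons, Function.update_self,
    Multiset.erase_cons_head]
  congr 1
  apply Multiset.map_congr rfl
  intro j hj
  have hji : j ≠ i := by
    intro h; subst h; exact (Finset.notMem_erase j _) (Finset.mem_def.mpr hj)
  simp [Function.update_of_ne hji]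

/-- **Lemma 1 (deterministic core).**
Selective-combining process: `v 0 = a`; at step `m` the minimum slot `θ m`
is updated to `max (v m (θ m)) (b m)`, the others are unchanged.  If the
`L + M` values `a_1,…,a_L, b_1,…,b_M` are pairwise distinct, then for every
`l`, the `l`-th smallest entry of the final vector `v M` equals the
`(M+l)`-th smallest element of the multiset `U = {a_1,…,a_L,b_1,…,b_M}`. -/
theorem retained_values_are_top_order_statistics
    (L M : ℕ) (hL : 0 < L) (hM : 0 < M)
    (a : Fin L → ℝ) (b : Fin M → ℝ)
    (hdist : Function.Injective (Sum.elim a b))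
    (v : ℕ → Fin L → ℝ) (θ : ℕ → Fin L)
    (hv0 : v 0 = a)
    (hmin : ∀ m : Fin M, ∀ l : Fin L, v m (θ m) ≤ v m l)
    (hupd : ∀ m : Fin M, v ((m : ℕ) + 1) (θ m) = max (v m (θ m)) (b m))
    (hoth : ∀ m : Fin M, ∀ l : Fin L, l ≠ θ m → v ((m : ℕ) + 1) l = v m l) :
    ∀ l : Fin L,
      ((Multiset.ofList (List.ofFn (v M))).sort (· ≤ ·)).getD l 0 =
        ((Multiset.ofList (List.ofFn a ++ List.ofFn b)).sort (· ≤ ·)).getD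
          (M + l) 0 := by
  classical
  -- the "total" multiset after m update values have arrived
  set T : ℕ → Multiset ℝ :=
    fun m => (↑(List.ofFn a) : Multiset ℝ) + ↑(((List.finRange M).take m).map b) with hT
  -- the current multiset of the vector
  set S : ℕ → Multiset ℝ := fun m => (↑(List.ofFn (v m)) : Multiset ℝ) with hS
  have hainj : Function.Injective a := by
    intro x y h
    have h' : Sum.elim a b (Sum.inl x) = Sum.elim a b (Sum.inl y) := by simpa using h
    simpa using hdist h' 
  -- the key invariant
  have key : ∀ m, m ≤ M → S m ≤ T m ∧ (T m).Nodup ∧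
      (∀ x ∈ T m - S m, ∀ y ∈ S m, x < y) := by
    intro m
    induction m with
    | zero =>
      intro _
      have hT0 : T 0 = (↑(List.ofFn a) : Multiset ℝ) := by simp [hT]
      have hS0 : S 0 = (↑(List.ofFn a) : Multiset ℝ) := by simp [hS, hv0]
      refine ⟨by rw [hT0, hS0], ?_, ?_⟩
      · rw [hT0]
        exact Multiset.coe_nodup.mpr (List.nodup_ofFn.mpr hainj)
      · intro x hx
        rw [hT0, hS0] at hx
        simp at hx
    | succ m ih =>
      intro hm1
      have hm : m < M := hm1
      obtain ⟨h1, h2, h3⟩ := ih (le_of_lt hm)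
      set i : Fin M := ⟨m, hm⟩ with hi
      have hmin' : ∀ y ∈ S m, v m (θ m) ≤ y := by
        intro y hy
        rw [hS] at hy
        simp only [Multiset.mem_coe, List.mem_ofFn, Set.mem_range] at hy
        obtain ⟨j, rfl⟩ := hy
        exact hmin i j
      have hmemmin : v m (θ m) ∈ S m := by
        rw [hS]
        simp only [Multiset.mem_coe, List.mem_ofFn, Set.mem_range]
        exact ⟨θ m, rfl⟩
      -- T (m+1) = b i ::ₘ T m
      have hTsucc : T (m + 1) = b i ::ₘ T m := by
        have hlen : m < (List.finRange M).length := by simpa using hm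
        have htake : (List.finRange M).take (m + 1)
            = (List.finRange M).take m ++ [i] := by
          rw [List.take_succ]
          congr 1
          rw [List.getElem?_eq_getElem hlen, List.getElem_finRange]
          rfl
        rw [hT]
        simp only [htake, List.map_append, List.map_cons, List.map_nil]
        rw [← Multiset.coe_add]
        rw [show ((↑[b i] : Multiset ℝ)) = (b i ::ₘ 0) from rfl, Multiset.add_cons, add_zero,
          Multiset.add_cons]
      -- b i is not already present
      have hbnot : b i ∉ T m := by
        rw [hT]
        intro hmem
        rw [Multiset.mem_add] at hmem
        rcases hmem with hmem | hmem
        · simp only [Multiset.mem_coe, List.mem_ofFn, Set.mem_range] at hmem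
          obtain ⟨x, hx⟩ := hmem
          have h' : Sum.elim a b (Sum.inl x) = Sum.elim a b (Sum.inr i) := by simpa using hx
          simpa using hdist h' 
        · simp only [Multiset.mem_coe, List.mem_map] at hmem
          obtain ⟨j, hj, hjb⟩ := hmem
          have hjlt : (j : ℕ) < m := by
            obtain ⟨k, hk, hkj⟩ := List.mem_iff_getElem.mp hj
            have hkm : k < m := by
              have := hk; rw [List.length_take, List.length_finRange] at this; omega
            have hjk : (j : ℕ) = k := by
              rw [← hkj, List.getElem_take, List.getElem_finRange]
              rfl
            omega
          have hji : j = i := by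
            have h' : Sum.elim a b (Sum.inr j) = Sum.elim a b (Sum.inr i) := by simpa using hjb
            simpa using hdist h' 
          rw [hji] at hjlt
          simp [hi] at hjlt
      have hne : b i ≠ v m (θ m) := by
        intro h
        exact hbnot (h ▸ Multiset.mem_of_le h1 hmemmin)
      have hT2 : (T (m + 1)).Nodup := by
        rw [hTsucc]
        exact Multiset.nodup_cons.mpr ⟨hbnot, h2⟩
      rcases lt_or_gt_of_ne hne with hlt | hgt
      · -- b i < current min : nothing changes
        have hveq : v (m + 1) = v m := by
          funext l'
          by_cases hl : l' = θ m
          · subst hl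
            have hupd' : v (m + 1) (θ m) = max (v m (θ m)) (b i) := hupd i
            rw [hupd', max_eq_left (le_of_lt hlt)]
          · exact hoth i l' hl
        have hSsucc : S (m + 1) = S m := by rw [hS]; simp [hveq]
        refine ⟨?_, hT2, ?_⟩
        · rw [hSsucc, hTsucc]
          exact le_trans h1 (Multiset.le_cons_self _ _)
        · intro x hx y hy
          rw [hSsucc] at hx hy
          rw [hTsucc, Multiset.cons_sub_of_le _ h1, Multiset.mem_cons] at hx
          rcases hx with rfl | hx
          · exact lt_of_lt_of_le hlt (hmin' y hy)
          · exact h3 x hx y hy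
      · -- current min < b i : min is replaced by b i
        have hveq : v (m + 1) = Function.update (v m) (θ m) (b i) := by
          funext l'
          by_cases hl : l' = θ m
          · subst hl
            have hupd' : v (m + 1) (θ m) = max (v m (θ m)) (b i) := hupd i
            rw [hupd', max_eq_right (le_of_lt hgt), Function.update_self]
          · rw [Function.update_of_ne hl]
            exact hoth i l' hl
        have hSsucc : S (m + 1) = b i ::ₘ (S m).erase (v m (θ m)) := by
          rw [hS]
          simp only [hveq]
          exact ofFn_update_multiset L (v m) (θ m) (b i)
        have hSnodup : (S m).Nodup := Multiset.nodup_of_le h1 h2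
        have hcount : ∀ x, Multiset.count x (S m) ≤ Multiset.count x (T m) :=
          Multiset.le_iff_count.mp h1
        refine ⟨?_, hT2, ?_⟩
        · rw [hSsucc, hTsucc]
          exact Multiset.cons_le_cons _ (le_trans (Multiset.erase_le _ _) h1)
        · intro x hx y hy
          have hdiff : T (m + 1) - S (m + 1) = v m (θ m) ::ₘ (T m - S m) := by
            rw [hTsucc, hSsucc, Multiset.sub_cons, Multiset.erase_cons_head]
            ext z
            rw [Multiset.count_sub, Multiset.count_cons, Multiset.count_sub]
            by_cases hz : z = v m (θ m)
            · subst hz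
              rw [Multiset.count_erase_self]
              have hc1 : 1 ≤ Multiset.count (v m (θ m)) (S m) :=
                Multiset.one_le_count_iff_mem.mpr hmemmin
              have hc2 := hcount (v m (θ m))
              rw [if_pos rfl]
              omega
            · rw [Multiset.count_erase_of_ne hz]
              simp [hz]
          rw [hdiff, Multiset.mem_cons] at hx
          rw [hSsucc, Multiset.mem_cons] at hy
          rcases hx with rfl | hx
          · rcases hy with rfl | hy
            · exact hgt
            · rw [Multiset.Nodup.mem_erase_iff hSnodup] at hy
              exact lt_of_le_of_ne (hmin' y hy.2) (Ne.symm hy.1)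
          · rcases hy with rfl | hy
            · exact lt_trans (h3 x hx _ hmemmin) hgt
            · rw [Multiset.Nodup.mem_erase_iff hSnodup] at hy
              exact h3 x hx y hy.2
  obtain ⟨h1, h2, h3⟩ := key M le_rfl
  -- identify T M with the full multiset
  have hTM : T M = (↑(List.ofFn a ++ List.ofFn b) : Multiset ℝ) := by
    have h' : (List.finRange M).take M = List.finRange M := by simp
    simp only [hT]
    rw [h', ← List.ofFn_eq_map, ← Multiset.coe_add]
  -- cardinalities
  have hcardS : Multiset.card (S M) = L := by rw [hS]; simp
  have hcardT : Multiset.card (T M) = L + M := by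
    rw [hTM]; simp
  have hcardsub : Multiset.card (T M - S M) = M := by
    rw [Multiset.card_sub h1, hcardS, hcardT]; omega
  -- the sorted total list splits
  have happ : ((T M - S M).sort (· ≤ ·) ++ (S M).sort (· ≤ ·)) = (T M).sort (· ≤ ·) := by
    refine (fun hp hs1 hs2 => List.Perm.eq_of_pairwise' (r := fun x y : ℝ => x ≤ y) hs1 hs2 hp) ?_ ?_ ?_
    · rw [← Multiset.coe_eq_coe, ← Multiset.coe_add, Multiset.sort_eq, Multiset.sort_eq,
        Multiset.sort_eq, tsub_add_cancel_of_le h1]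
    · rw [List.pairwise_append]
      refine ⟨Multiset.pairwise_sort _ _, Multiset.pairwise_sort _ _, ?_⟩
      intro x hx y hy
      rw [Multiset.mem_sort] at hx hy
      exact le_of_lt (h3 x hx y hy)
    · exact Multiset.pairwise_sort _ _
  intro l
  have hgoalT : (Multiset.ofList (List.ofFn a ++ List.ofFn b)) = T M := hTM.symm
  have hgoalS : (Multiset.ofList (List.ofFn (v M))) = S M := rfl
  rw [hgoalT, hgoalS, ← happ]
  have hlen : ((T M - S M).sort (· ≤ ·)).length = M := by
    rw [Multiset.length_sort, hcardsub]
  rw [List.getD_append_right _ _ _ _ (by rw [hlen]; omega), hlen]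
  congr 1
  omega
end

section
/- The multiset of final values {v^(M+1)(1),…,v^(M+1)(L)} is a sub-multiset of U of cardinality L; equivalently, every final value equals either its initial value a_l or one of the update values b_m, and distinct slots carry distinct elements of U. -/
open Multiset Finset

lemma step_le {L : ℕ} (f g : Fin L → ℝ) (t : Fin L) (c : ℝ)
    (ht : g t = f t ∨ g t = c)
    (hoff : ∀ l, l ≠ t → g l = f l) :
    Multiset.map g Finset.univ.val ≤ c ::ₘ Multiset.map f Finset.univ.val := by
  have hu : (Finset.univ : Finset (Fin L)).val
      = t ::ₘ ((Finset.univ.erase t).val) := by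
    conv_lhs => rw [← Finset.insert_erase (Finset.mem_univ t)]
    rw [Finset.insert_val_of_notMem (Finset.notMem_erase t _)]
  have hmape : Multiset.map g (Finset.univ.erase t).val
      = Multiset.map f (Finset.univ.erase t).val := by
    apply Multiset.map_congr rfl
    intro x hx
    exact hoff x (Finset.ne_of_mem_erase (Finset.mem_val.mp hx))
  have hle : (Finset.univ.erase t).val ≤ (Finset.univ : Finset (Fin L)).val := by
    rw [Finset.erase_val]
    exact Multiset.erase_le _ _
  rcases ht with h | h
  · rw [hu, Multiset.map_cons, Multiset.map_cons, hmape, h]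
    exact Multiset.le_cons_self _ _
  · calc Multiset.map g Finset.univ.val
        = c ::ₘ Multiset.map f (Finset.univ.erase t).val := by
          rw [hu, Multiset.map_cons, hmape, h]
      _ ≤ c ::ₘ Multiset.map f Finset.univ.val :=
          Multiset.cons_le_cons _ (Multiset.map_le_map hle)

/-- The multiset of final values of the selective-combining process is a
sub-multiset of `U = {a_1,…,a_L, b_1,…,b_M}` of cardinality `L`. -/
theorem final_values_submultiset
    (L M : ℕ) (hL : 0 < L) (hM : 0 < M)
    (a : Fin L → ℝ) (b : Fin M → ℝ)
    (hdist : Function.Injective (Sum.elim a b))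
    (v : ℕ → Fin L → ℝ) (θ : ℕ → Fin L)
    (hv0 : v 0 = a)
    (hmin : ∀ m : Fin M, ∀ l : Fin L, v m (θ m) ≤ v m l)
    (hupd : ∀ m : Fin M, v ((m : ℕ) + 1) (θ m) = max (v m (θ m)) (b m))
    (hoth : ∀ m : Fin M, ∀ l : Fin L, l ≠ θ m → v ((m : ℕ) + 1) l = v m l) :
    Multiset.ofList (List.ofFn (v M)) ≤
        Multiset.ofList (List.ofFn a ++ List.ofFn b) ∧
      (Multiset.ofList (List.ofFn (v M))).card = L := by
  have key : ∀ k, k ≤ M →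
      Multiset.map (v k) Finset.univ.val ≤
        Multiset.map a Finset.univ.val +
          Multiset.map b (Finset.filter (fun i : Fin M => (i : ℕ) < k) Finset.univ).val := by
    intro k
    induction k with
    | zero =>
      intro _
      have : (Finset.filter (fun i : Fin M => (i : ℕ) < 0) Finset.univ) = ∅ := by
        ext i; simp
      rw [hv0, this]
      simp
    | succ k ih =>
      intro hk
      have hkM : k < M := hk
      set km : Fin M := ⟨k, hkM⟩ with hkm
      have hstep : Multiset.map (v (k + 1)) Finset.univ.val ≤
          b km ::ₘ Multiset.map (v k) Finset.univ.val := by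
        apply step_le (v k) (v (k + 1)) (θ k) (b km)
        · have := hupd km
          simp only [hkm] at this
          rcases max_choice (v k (θ k)) (b km) with h | h <;>
            [left; right] <;> rw [this] <;> exact h
        · intro l hl
          exact hoth km l hl
      have hfilt : (Finset.filter (fun i : Fin M => (i : ℕ) < k + 1) Finset.univ)
          = insert km (Finset.filter (fun i : Fin M => (i : ℕ) < k) Finset.univ) := by
        ext i
        simp only [Finset.mem_filter, Finset.mem_univ, true_and, Finset.mem_insert]
        constructor
        · intro h
          rcases Nat.lt_succ_iff_lt_or_eq.mp h with h | h
          · exact Or.inr h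
          · exact Or.inl (Fin.ext h)
        · rintro (rfl | h)
          · exact Nat.lt_succ_self _
          · exact Nat.lt_succ_of_lt h
      have hnm : km ∉ (Finset.filter (fun i : Fin M => (i : ℕ) < k) Finset.univ) := by
        simp [hkm]
      calc Multiset.map (v (k + 1)) Finset.univ.val
          ≤ b km ::ₘ Multiset.map (v k) Finset.univ.val := hstep
        _ ≤ b km ::ₘ (Multiset.map a Finset.univ.val +
              Multiset.map b (Finset.filter (fun i : Fin M => (i : ℕ) < k) Finset.univ).val) :=
            Multiset.cons_le_cons _ (ih (le_of_lt hkM))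
        _ = Multiset.map a Finset.univ.val +
              Multiset.map b (Finset.filter (fun i : Fin M => (i : ℕ) < k + 1) Finset.univ).val := by
            rw [hfilt, Finset.insert_val_of_notMem hnm, Multiset.map_cons,
              Multiset.add_cons]
  have huniv : (Finset.filter (fun i : Fin M => (i : ℕ) < M) Finset.univ)
      = (Finset.univ : Finset (Fin M)) := by
    ext i; simp [i.isLt]
  have hmain := key M le_rfl
  rw [huniv] at hmain
  have hconv : ∀ (n : ℕ) (f : Fin n → ℝ),
      Multiset.ofList (List.ofFn f) = Multiset.map f Finset.univ.val := by
    intro n f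
    have : (Finset.univ : Finset (Fin n)).val = (List.finRange n : Multiset (Fin n)) := rfl
    rw [this, Multiset.map_coe, List.ofFn_eq_map]
  constructor
  · have hsplit : Multiset.ofList (List.ofFn a ++ List.ofFn b)
        = Multiset.ofList (List.ofFn a) + Multiset.ofList (List.ofFn b) := rfl
    rw [hconv L (v M), hsplit, hconv L a, hconv M b]
    exact hmain
  · simp
end

section
/- For every l with 1 ≤ l ≤ L, the l-th smallest value of the final vector is at least the (M+l)-th smallest element of U; that is, v'_l ≥ u'_{M+l}. Equivalently, for each final value there are at least M elements of U (counted with multiplicity) strictly smaller than it, one arising from each update step. -/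
theorem countP_eq_sum_map' {α : Type*} (p : α → Bool) (l : List α) :
    l.countP p = (l.map (fun i => if p i then 1 else 0)).sum := by
  induction l with
  | nil => simp
  | cons h t ih => by_cases hp : p h <;> simp [List.countP_cons, hp, ih, Nat.add_comm]
theorem countP_ofFn_eq_card {n : ℕ} (f : Fin n → ℝ) (x : ℝ) :
    List.countP (fun y => decide (y < x)) (List.ofFn f)
      = (Finset.univ.filter (fun l => f l < x)).card := by
  rw [List.ofFn_eq_map, List.countP_map, Fin.univ_def, Finset.card_filter,
    Finset.sum_eq_multiset_sum, countP_eq_sum_map']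
  simp

theorem countP_lt_getElem_le {s : List ℝ} (hs : s.Pairwise (· ≤ ·)) {i : ℕ} (hi : i < s.length) :
    s.countP (fun y => decide (y < s[i])) ≤ i := by
  generalize hx : s[i] = x
  have key : s.countP (fun y => decide (y < x))
      = (s.take i).countP (fun y => decide (y < x))
        + (s.drop i).countP (fun y => decide (y < x)) := by
    conv_lhs => rw [← List.take_append_drop i s, List.countP_append]
  have h1 : (s.take i).countP (fun y => decide (y < x)) ≤ i := by
    calc (s.take i).countP _ ≤ (s.take i).length := List.countP_le_length
    _ ≤ i := by simp [List.length_take]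
  have h2 : (s.drop i).countP (fun y => decide (y < x)) = 0 := by
    rw [List.countP_eq_zero]
    intro a ha
    rw [List.mem_iff_getElem] at ha
    obtain ⟨j, hj, rfl⟩ := ha
    rw [List.getElem_drop]
    simp only [decide_eq_true_eq, not_lt, ← hx]
    have hlen : j < (List.drop i s).length := hj
    rw [List.length_drop] at hlen
    rcases Nat.eq_zero_or_pos j with h0 | h0
    · subst h0; simp
    · exact List.pairwise_iff_getElem.mp hs i (i + j) hi (by omega) (by omega)
  omega

theorem le_getElem_of_countP_le {t : List ℝ} (ht : t.Pairwise (· ≤ ·)) {i : ℕ} (hi : i < t.length)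
    {x : ℝ} (h : t.countP (fun y => decide (y < x)) ≤ i) : x ≤ t[i] := by
  by_contra hc
  push_neg at hc
  have key : t.countP (fun y => decide (y < x))
      = (t.take (i+1)).countP (fun y => decide (y < x))
        + (t.drop (i+1)).countP (fun y => decide (y < x)) := by
    conv_lhs => rw [← List.take_append_drop (i+1) t, List.countP_append]
  have hall : (t.take (i+1)).countP (fun y => decide (y < x)) = (t.take (i+1)).length := by
    rw [List.countP_eq_length]
    intro a ha
    rw [List.mem_iff_getElem] at ha
    obtain ⟨j, hj, rfl⟩ := ha
    rw [List.getElem_take]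
    simp only [decide_eq_true_eq]
    have hj' : j < i + 1 := by
      have := hj; rw [List.length_take] at this; omega
    rcases Nat.lt_or_ge j i with h0 | h0
    · exact lt_of_le_of_lt (List.pairwise_iff_getElem.mp ht j i (by omega) hi h0) hc
    · have : j = i := by omega
      subst this; exact hc
  have hlen : (t.take (i+1)).length = i + 1 := by rw [List.length_take]; omega
  omega

theorem scp_count_invariant (L M : ℕ)
    (b : Fin M → ℝ)
    (v : ℕ → Fin L → ℝ) (θ : ℕ → Fin L)
    (hmin : ∀ m : Fin M, ∀ l : Fin L, v m (θ m) ≤ v m l)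
    (hupd : ∀ m : Fin M, v ((m : ℕ) + 1) (θ m) = max (v m (θ m)) (b m))
    (hoth : ∀ m : Fin M, ∀ l : Fin L, l ≠ θ m → v ((m : ℕ) + 1) l = v m l)
    (x : ℝ) :
    ∀ m ≤ M, (Finset.univ.filter (fun i : Fin L => v m i < x)).card ≤
      ((Finset.univ.filter (fun i : Fin L => v 0 i < x)).card
        + (Finset.univ.filter (fun j : Fin M => (j : ℕ) < m ∧ b j < x)).card) - m := by
  intro m hm
  induction m with
  | zero => simp
  | succ m ih =>
    have hmM : m < M := by omega
    have ih' := ih (by omega)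
    set mf : Fin M := ⟨m, hmM⟩ with hmf
    have hle : ∀ i : Fin L, v m i ≤ v (m + 1) i := by
      intro i
      by_cases hi : i = θ m
      · subst hi
        have := hupd mf
        simp only [hmf] at this
        rw [this]; exact le_max_left _ _
      · rw [hoth mf i hi]
    have hmono : (Finset.univ.filter (fun i : Fin L => v (m+1) i < x)).card ≤
        (Finset.univ.filter (fun i : Fin L => v m i < x)).card := by
      apply Finset.card_le_card
      intro i hi
      rw [Finset.mem_filter] at hi ⊢
      exact ⟨hi.1, lt_of_le_of_lt (hle i) hi.2⟩
    have hB : (Finset.univ.filter (fun j : Fin M => (j : ℕ) < m + 1 ∧ b j < x)).card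
        = (Finset.univ.filter (fun j : Fin M => (j : ℕ) < m ∧ b j < x)).card
          + (if b mf < x then 1 else 0) := by
      by_cases hbx : b mf < x
      · rw [if_pos hbx]
        have : (Finset.univ.filter (fun j : Fin M => (j : ℕ) < m + 1 ∧ b j < x))
            = insert mf (Finset.univ.filter (fun j : Fin M => (j : ℕ) < m ∧ b j < x)) := by
          ext j
          simp only [Finset.mem_filter, Finset.mem_insert, Finset.mem_univ, true_and]
          constructor
          · rintro ⟨hj1, hj2⟩
            rcases Nat.lt_or_ge (j : ℕ) m with h | h
            · exact Or.inr ⟨h, hj2⟩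
            · left; apply Fin.ext; simp only [hmf]; omega
          · rintro (rfl | ⟨hj1, hj2⟩)
            · exact ⟨by simp [hmf], hbx⟩
            · exact ⟨by omega, hj2⟩
        rw [this, Finset.card_insert_of_notMem (by simp [hmf])]
      · rw [if_neg hbx]
        simp only [Nat.add_zero]
        apply congrArg Finset.card
        ext j
        simp only [Finset.mem_filter, Finset.mem_univ, true_and]
        constructor
        · rintro ⟨hj1, hj2⟩
          refine ⟨?_, hj2⟩
          rcases Nat.lt_or_ge (j : ℕ) m with h | h
          · exact h
          · exfalso; apply hbx
            have : j = mf := by apply Fin.ext; simp [hmf]; omega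
            rwa [this] at hj2
        · rintro ⟨hj1, hj2⟩; exact ⟨by omega, hj2⟩
    by_cases hc : (Finset.univ.filter (fun i : Fin L => v m i < x)).card = 0
    · have : (Finset.univ.filter (fun i : Fin L => v (m+1) i < x)).card = 0 := by omega
      omega
    have hpos : 0 < (Finset.univ.filter (fun i : Fin L => v m i < x)).card := Nat.pos_of_ne_zero hc
    obtain ⟨i0, hi0⟩ := Finset.card_pos.mp hpos
    rw [Finset.mem_filter] at hi0
    have hθ : v m (θ m) < x := lt_of_le_of_lt (by simpa [hmf] using hmin mf i0) hi0.2
    have hθmem : θ m ∈ Finset.univ.filter (fun i : Fin L => v m i < x) := by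
      simp [hθ]
    by_cases hbx : b mf < x
    · -- count stays same at most
      rw [hB, if_pos hbx]
      omega
    · -- strict drop
      push_neg at hbx
      have hnew : ¬ v (m+1) (θ m) < x := by
        have := hupd mf
        simp only [hmf] at this
        rw [this]
        push_neg
        exact le_trans hbx (le_max_right _ _)
      have hsub : (Finset.univ.filter (fun i : Fin L => v (m+1) i < x)) ⊆
          (Finset.univ.filter (fun i : Fin L => v m i < x)).erase (θ m) := by
        intro i hi
        rw [Finset.mem_filter] at hi
        rw [Finset.mem_erase, Finset.mem_filter]
        refine ⟨?_, Finset.mem_univ _, lt_of_le_of_lt (hle i) hi.2⟩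
        intro h
        exact hnew (h ▸ hi.2)
      have hcard := Finset.card_le_card hsub
      rw [Finset.card_erase_of_mem hθmem] at hcard
      rw [hB, if_neg (not_lt.mpr hbx)]
      omega

/-- For every `l`, the `l`-th smallest value of the final vector of the
selective-combining process is at least the `(M+l)`-th smallest element of
`U = {a_1,…,a_L, b_1,…,b_M}`. -/
theorem sorted_final_values_ge_order_statistics
    (L M : ℕ) (hL : 0 < L) (hM : 0 < M)
    (a : Fin L → ℝ) (b : Fin M → ℝ)
    (hdist : Function.Injective (Sum.elim a b))
    (v : ℕ → Fin L → ℝ) (θ : ℕ → Fin L)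
    (hv0 : v 0 = a)
    (hmin : ∀ m : Fin M, ∀ l : Fin L, v m (θ m) ≤ v m l)
    (hupd : ∀ m : Fin M, v ((m : ℕ) + 1) (θ m) = max (v m (θ m)) (b m))
    (hoth : ∀ m : Fin M, ∀ l : Fin L, l ≠ θ m → v ((m : ℕ) + 1) l = v m l) :
    ∀ l : Fin L,
      ((Multiset.ofList (List.ofFn a ++ List.ofFn b)).sort (· ≤ ·)).getD
          (M + l) 0 ≤
        ((Multiset.ofList (List.ofFn (v M))).sort (· ≤ ·)).getD l 0 := by
  intro l
  set cmb : List ℝ := List.ofFn a ++ List.ofFn b with hcmb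
  set sU : List ℝ := (Multiset.ofList cmb).sort (· ≤ ·) with hsU
  set sV : List ℝ := (Multiset.ofList (List.ofFn (v M))).sort (· ≤ ·) with hsV
  have hlenU : sU.length = L + M := by
    simp [hsU, Multiset.length_sort, hcmb]
  have hlenV : sV.length = L := by
    simp [hsV, Multiset.length_sort]
  have hiU : M + (l : ℕ) < sU.length := by rw [hlenU]; omega
  have hiV : (l : ℕ) < sV.length := by rw [hlenV]; exact l.isLt
  rw [List.getD_eq_getElem _ _ hiU, List.getD_eq_getElem _ _ hiV]
  set x : ℝ := sU[M + (l : ℕ)] with hx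
  apply le_getElem_of_countP_le (Multiset.pairwise_sort _ _) hiV
  have hpermV : sV.Perm (List.ofFn (v M)) :=
    Multiset.coe_eq_coe.mp (Multiset.sort_eq _ _)
  have hpermU : sU.Perm cmb :=
    Multiset.coe_eq_coe.mp (Multiset.sort_eq _ _)
  rw [hpermV.countP_eq, countP_ofFn_eq_card]
  -- count in U below x is at most M + l
  have hU : cmb.countP (fun y => decide (y < x)) ≤ M + (l : ℕ) := by
    rw [← hpermU.countP_eq]
    exact countP_lt_getElem_le (Multiset.pairwise_sort _ _) hiU
  rw [hcmb, List.countP_append, countP_ofFn_eq_card, countP_ofFn_eq_card] at hU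
  have hinv := scp_count_invariant L M b v θ hmin hupd hoth x M le_rfl
  have hBM : (Finset.univ.filter (fun j : Fin M => (j : ℕ) < M ∧ b j < x))
      = (Finset.univ.filter (fun j : Fin M => b j < x)) := by
    ext j
    simp [j.isLt]
  rw [hBM, hv0] at hinv
  omega
end

section
/- For every x > 0, P( XY/(X + Y + 1) > x ) = ∫_{x}^{∞} λ₂ e^{−λ₂ y} · exp( −λ₁ x (y + 1)/(y − x) ) dy. -/
open MeasureTheory ProbabilityTheory

/-- **CCDF of the AF relayed-link SNR.** If `X` and `Y` are independent
exponential random variables with rates `l1` and `l2`, then for every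
`x > 0`,
`P(XY/(X+Y+1) > x) = ∫_{x}^{∞} l2 e^{−l2 y} · exp(−l1 x (y+1)/(y−x)) dy`. -/
theorem ccdf_af_relayed_snr
    {Ω : Type*} [MeasurableSpace Ω] (μ : Measure Ω) [IsProbabilityMeasure μ]
    (l1 l2 : ℝ) (h1 : 0 < l1) (h2 : 0 < l2)
    (X Y : Ω → ℝ) (hX : Measurable X) (hY : Measurable Y)
    (hindep : IndepFun X Y μ)
    (hXneg : μ {ω | X ω < 0} = 0) (hYneg : μ {ω | Y ω < 0} = 0)
    (hXcdf : ∀ t : ℝ, 0 ≤ t →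
      μ {ω | X ω ≤ t} = ENNReal.ofReal (1 - Real.exp (-l1 * t)))
    (hYcdf : ∀ t : ℝ, 0 ≤ t →
      μ {ω | Y ω ≤ t} = ENNReal.ofReal (1 - Real.exp (-l2 * t)))
    (x : ℝ) (hx : 0 < x) :
    (μ {ω | x < X ω * Y ω / (X ω + Y ω + 1)}).toReal =
      ∫ y in Set.Ioi x,
        l2 * Real.exp (-l2 * y) * Real.exp (-l1 * x * (y + 1) / (y - x)) := by
  have hXm : IsProbabilityMeasure (μ.map X) := Measure.isProbabilityMeasure_map hX.aemeasurable
  have hYm : IsProbabilityMeasure (μ.map Y) := Measure.isProbabilityMeasure_map hY.aemeasurable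
  set νX := μ.map X with hνX
  set νY := μ.map Y with hνY
  -- tail of X
  have hXtail : ∀ c : ℝ, 0 ≤ c → νX (Set.Ioi c) = ENNReal.ofReal (Real.exp (-l1 * c)) := by
    intro c hc
    have hIic : νX (Set.Iic c) = ENNReal.ofReal (1 - Real.exp (-l1 * c)) := by
      rw [hνX, Measure.map_apply hX measurableSet_Iic]
      exact hXcdf c hc
    have hcompl : Set.Ioi c = (Set.Iic c)ᶜ := by rw [Set.compl_Iic]
    have hle1 : Real.exp (-l1 * c) ≤ 1 := Real.exp_le_one_iff.2 (by nlinarith)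
    rw [hcompl, measure_compl measurableSet_Iic (measure_ne_top _ _), hIic, measure_univ,
      ← ENNReal.ofReal_one, ← ENNReal.ofReal_sub _ (by linarith)]
    congr 1
    ring
  -- law of Y is the exponential measure with rate l2
  have hexp2 : IsProbabilityMeasure (expMeasure l2) := isProbabilityMeasure_expMeasure h2
  have hexpIic : ∀ t : ℝ, expMeasure l2 (Set.Iic t)
      = ENNReal.ofReal (if 0 ≤ t then 1 - Real.exp (-(l2 * t)) else 0) := by
    intro t
    have : expMeasure l2 (Set.Iic t) = ∫⁻ y in Set.Iic t, exponentialPDF l2 y := by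
      rw [expMeasure, gammaMeasure, withDensity_apply _ measurableSet_Iic]
      rfl
    rw [this, lintegral_exponentialPDF_eq_antiDeriv h2 t]
  have hνYexp : νY = expMeasure l2 := by
    refine Measure.ext_of_Iic νY (expMeasure l2) fun t => ?_
    rcases le_or_gt 0 t with ht | ht
    · rw [hνY, Measure.map_apply hY measurableSet_Iic, hexpIic, if_pos ht]
      have : Y ⁻¹' Set.Iic t = {ω | Y ω ≤ t} := rfl
      rw [this, hYcdf t ht, neg_mul]
    · have hsub : νY (Set.Iic t) ≤ νY (Set.Iio 0) :=
        measure_mono (fun a (ha : a ≤ t) => lt_of_le_of_lt ha ht)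
      have h0 : νY (Set.Iio 0) = 0 := by
        rw [hνY, Measure.map_apply hY measurableSet_Iio]
        exact hYneg
      rw [hexpIic, if_neg (not_le.2 ht), ENNReal.ofReal_zero]
      exact le_antisymm (h0 ▸ hsub) zero_le
  -- joint law
  have hmap : μ.map (fun ω => (Y ω, X ω)) = νY.prod νX :=
    (indepFun_iff_map_prod_eq_prod_map_map hY.aemeasurable hX.aemeasurable).1 hindep.symm
  have hSm : MeasurableSet {p : ℝ × ℝ | x < p.2 * p.1 / (p.2 + p.1 + 1)} :=
    measurableSet_lt measurable_const ((measurable_snd.mul measurable_fst).div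
      ((measurable_snd.add measurable_fst).add measurable_const))
  have hE : μ {ω | x < X ω * Y ω / (X ω + Y ω + 1)}
      = (νY.prod νX) {p : ℝ × ℝ | x < p.2 * p.1 / (p.2 + p.1 + 1)} := by
    rw [← hmap, Measure.map_apply (hY.prodMk hX) hSm]
    rfl
  -- a.e. nonnegativity of the laws
  have hX0 : ∀ᵐ a ∂νX, 0 ≤ a := by
    rw [ae_iff]
    have hset : {a : ℝ | ¬ 0 ≤ a} = Set.Iio 0 := by ext a; simp only [Set.mem_setOf_eq, Set.mem_Iio, not_le]
    rw [hset, hνX, Measure.map_apply hX measurableSet_Iio]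
    exact hXneg
  have hY0 : ∀ᵐ y ∂νY, 0 ≤ y := by
    rw [ae_iff]
    have hset : {y : ℝ | ¬ 0 ≤ y} = Set.Iio 0 := by ext a; simp only [Set.mem_setOf_eq, Set.mem_Iio, not_le]
    rw [hset, hνY, Measure.map_apply hY measurableSet_Iio]
    exact hYneg
  -- slice measure
  have hslice : ∀ y : ℝ, 0 ≤ y → νX {a : ℝ | x < a * y / (a + y + 1)}
      = if x < y then ENNReal.ofReal (Real.exp (-l1 * (x * (y + 1) / (y - x)))) else 0 := by
    intro y hy
    by_cases hxy : x < y
    · rw [if_pos hxy]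
      have hset : {a : ℝ | x < a * y / (a + y + 1)}
          =ᵐ[νX] Set.Ioi (x * (y + 1) / (y - x)) := by
        rw [Filter.eventuallyEq_set]
        filter_upwards [hX0] with a ha
        have hd : (0:ℝ) < a + y + 1 := by linarith
        rw [Set.mem_Ioi, lt_div_iff₀ hd, div_lt_iff₀ (by linarith : (0:ℝ) < y - x)]
        constructor <;> intro h <;> nlinarith
      rw [measure_congr hset]
      exact hXtail _ (div_nonneg (by nlinarith) (by linarith))
    · rw [if_neg hxy]
      have hset : {a : ℝ | x < a * y / (a + y + 1)} =ᵐ[νX] (∅ : Set ℝ) := by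
        rw [Filter.eventuallyEq_set]
        filter_upwards [hX0] with a ha
        simp only [Set.mem_setOf_eq, Set.mem_empty_iff_false, iff_false]
        intro h
        have hd : (0:ℝ) < a + y + 1 := by linarith
        rw [lt_div_iff₀ hd] at h
        push_neg at hxy
        nlinarith
      rw [measure_congr hset, measure_empty]
  -- rewrite the product-measure integral
  have hint : ∫⁻ y, νX (Prod.mk y ⁻¹' {p : ℝ × ℝ | x < p.2 * p.1 / (p.2 + p.1 + 1)}) ∂νY
      = ∫⁻ y in Set.Ioi x,
          ENNReal.ofReal (Real.exp (-l1 * (x * (y + 1) / (y - x)))) ∂νY := by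
    rw [← lintegral_indicator measurableSet_Ioi]
    refine lintegral_congr_ae ?_
    filter_upwards [hY0] with y hy
    have hpre : Prod.mk y ⁻¹' {p : ℝ × ℝ | x < p.2 * p.1 / (p.2 + p.1 + 1)}
        = {a : ℝ | x < a * y / (a + y + 1)} := rfl
    rw [hpre, hslice y hy]
    by_cases hxy : x < y
    · rw [if_pos hxy, Set.indicator_of_mem (Set.mem_Ioi.2 hxy)]
    · rw [if_neg hxy, Set.indicator_of_notMem (by simpa using hxy)]
  -- change of measure to Lebesgue
  have hmeas : Measurable fun y : ℝ =>
      ENNReal.ofReal (Real.exp (-l1 * (x * (y + 1) / (y - x)))) := by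
    apply ENNReal.measurable_ofReal.comp
    exact Real.measurable_exp.comp (measurable_const.mul
      ((measurable_const.mul (measurable_id.add measurable_const)).div
        (measurable_id.sub measurable_const)))
  have hwd : ∫⁻ y in Set.Ioi x,
        ENNReal.ofReal (Real.exp (-l1 * (x * (y + 1) / (y - x)))) ∂νY
      = ∫⁻ y in Set.Ioi x,
          ENNReal.ofReal (l2 * Real.exp (-l2 * y)
            * Real.exp (-l1 * x * (y + 1) / (y - x))) := by
    rw [hνYexp, expMeasure, gammaMeasure,
      setLIntegral_withDensity_eq_setLIntegral_mul _ ((show Measurable (gammaPDF 1 l2) from (measurable_gammaPDFReal 1 l2).ennreal_ofReal)) hmeas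
        measurableSet_Ioi]
    refine setLIntegral_congr_fun measurableSet_Ioi ?_
    intro y hy
    have hy0 : (0:ℝ) ≤ y := le_of_lt (lt_trans hx hy)
    have hpdf : gammaPDF 1 l2 y = ENNReal.ofReal (l2 * Real.exp (-(l2 * y))) := by
      have := exponentialPDF_of_nonneg (r := l2) hy0
      rw [exponentialPDF, exponentialPDFReal] at this
      exact this
    simp only [Pi.mul_apply, hpdf]
    rw [← ENNReal.ofReal_mul (by positivity)]
    congr 1
    rw [neg_mul l2 y]
    congr 2
    ring
  -- convert to Bochner integral
  have hF : Measurable fun y : ℝ =>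
      l2 * Real.exp (-l2 * y) * Real.exp (-l1 * x * (y + 1) / (y - x)) := by
    apply ((measurable_const.mul (Real.measurable_exp.comp
      (measurable_const.mul measurable_id))).mul
      (Real.measurable_exp.comp ((measurable_const.mul
        (measurable_id.add measurable_const)).div (measurable_id.sub measurable_const))))
  have hRHS : ∫ y in Set.Ioi x,
        l2 * Real.exp (-l2 * y) * Real.exp (-l1 * x * (y + 1) / (y - x))
      = (∫⁻ y in Set.Ioi x,
          ENNReal.ofReal (l2 * Real.exp (-l2 * y)
            * Real.exp (-l1 * x * (y + 1) / (y - x)))).toReal := by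
    rw [integral_eq_lintegral_of_nonneg_ae (Filter.Eventually.of_forall fun y => by positivity)
      hF.aestronglyMeasurable]
  rw [hE, Measure.prod_apply hSm, hint, hwd, hRHS]
end

section
/- There exists a constant C > 0 (depending only on L, M, N, A) such that for all β ∈ (0, β₀], P( at least M+1 of the random variables X_1,…,X_{L+M} are ≤ β ) ≤ C · β^{M+N}. -/
open MeasureTheory ProbabilityTheory

/-- **Upper bound yielding diversity order `M + N`.** Let `X 1,…,X (L+M)` be
mutually independent, with `P(X k ≤ β) ≤ A β^N` for the first `L` of them and
`P(X k ≤ β) ≤ A β` for the last `M` of them, for all `β ∈ (0, β₀]`. Then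
there is `C > 0` with `P(at least M+1 of the X k are ≤ β) ≤ C β^(M+N)` for
all `β ∈ (0, β₀]`. -/
theorem outage_upper_bound
    {Ω : Type*} [MeasurableSpace Ω] (μ : Measure Ω) [IsProbabilityMeasure μ]
    (L M N : ℕ) (hL : 0 < L) (hM : 0 < M) (hN : 0 < N)
    (X : Fin (L + M) → Ω → ℝ) (hmeas : ∀ k, Measurable (X k))
    (hindep : iIndepFun X μ)
    (A β₀ : ℝ) (hA : 1 ≤ A) (hβ₀ : β₀ ∈ Set.Ioc (0 : ℝ) 1)
    (hdir : ∀ k : Fin (L + M), (k : ℕ) < L → ∀ β ∈ Set.Ioc (0 : ℝ) β₀,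
      (μ {ω | X k ω ≤ β}).toReal ≤ A * β ^ N)
    (hrel : ∀ k : Fin (L + M), L ≤ (k : ℕ) → ∀ β ∈ Set.Ioc (0 : ℝ) β₀,
      (μ {ω | X k ω ≤ β}).toReal ≤ A * β) :
    ∃ C : ℝ, 0 < C ∧ ∀ β ∈ Set.Ioc (0 : ℝ) β₀,
      (μ {ω | M + 1 ≤ {k : Fin (L + M) | X k ω ≤ β}.ncard}).toReal ≤
        C * β ^ (M + N) := by
  classical
  have hA0 : (0 : ℝ) < A := lt_of_lt_of_le one_pos hA
  refine ⟨(((L + M).choose (M + 1)) : ℝ) * A ^ (M + 1) + 1, by positivity, ?_⟩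
  intro β hβ
  obtain ⟨hβ0, hββ₀⟩ := hβ
  have hβ1 : β ≤ 1 := hββ₀.trans hβ₀.2
  set E : Fin (L + M) → Set Ω := fun k => {ω | X k ω ≤ β} with hE
  set Psets : Finset (Finset (Fin (L + M))) := Finset.univ.powersetCard (M + 1) with hPsets
  -- inclusion into a union over (M+1)-subsets
  have hincl : {ω | M + 1 ≤ {k : Fin (L + M) | X k ω ≤ β}.ncard} ⊆
      ⋃ T ∈ Psets, ⋂ k ∈ T, E k := by
    intro ω hω
    simp only [Set.mem_setOf_eq] at hω
    have hcard : M + 1 ≤ (Finset.univ.filter (fun k : Fin (L + M) => X k ω ≤ β)).card := by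
      rwa [Set.ncard_eq_toFinset_card', Set.toFinset_setOf] at hω
    obtain ⟨T, hTsub, hTcard⟩ := Finset.exists_subset_card_eq hcard
    simp only [Set.mem_iUnion]
    exact ⟨T, Finset.mem_powersetCard.2 ⟨Finset.subset_univ T, hTcard⟩,
      Set.mem_iInter₂.2 fun k hk => (Finset.mem_filter.1 (hTsub hk)).2⟩
  -- cardinality of the "relay" indices
  have hfiltercard : (Finset.univ.filter (fun k : Fin (L + M) => L ≤ (k : ℕ))).card ≤ M := by
    have hmaps : ∀ k ∈ Finset.univ.filter (fun k : Fin (L + M) => L ≤ (k : ℕ)),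
        (k : ℕ) - L ∈ Finset.range M := by
      intro k hk
      have hlt := k.isLt
      simp only [Finset.mem_filter] at hk
      simp only [Finset.mem_range]
      omega
    have hinj : Set.InjOn (fun k : Fin (L + M) => (k : ℕ) - L)
        (Finset.univ.filter (fun k : Fin (L + M) => L ≤ (k : ℕ))) := by
      intro a ha b hb hab
      simp only [Finset.coe_filter, Set.mem_setOf_eq] at ha hb
      simp only at hab
      exact Fin.ext (by omega)
    simpa using Finset.card_le_card_of_injOn _ hmaps hinj
  -- per-subset bound
  have hTbound : ∀ T ∈ Psets, (μ (⋂ k ∈ T, E k)).toReal ≤ A ^ (M + 1) * β ^ (M + N) := by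
    intro T hT
    obtain ⟨-, hTcard⟩ := Finset.mem_powersetCard.1 hT
    have hprod : μ (⋂ k ∈ T, E k) = ∏ k ∈ T, μ (E k) :=
      hindep.meas_biInter (fun k _hk => ⟨Set.Iic β, measurableSet_Iic, rfl⟩)
    have hfac : ∀ k ∈ T, (μ (E k)).toReal ≤ A * β ^ (if (k : ℕ) < L then N else 1) := by
      intro k _
      by_cases hk : (k : ℕ) < L
      · simpa [hk] using hdir k hk β ⟨hβ0, hββ₀⟩
      · simpa [hk] using hrel k (le_of_not_gt hk) β ⟨hβ0, hββ₀⟩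
    have hexp : M + N ≤ ∑ k ∈ T, (if (k : ℕ) < L then N else 1) := by
      obtain ⟨k0, hk0T, hk0L⟩ : ∃ k ∈ T, (k : ℕ) < L := by
        by_contra h
        push_neg at h
        have hsub : T ⊆ Finset.univ.filter (fun k : Fin (L + M) => L ≤ (k : ℕ)) :=
          fun k hk => Finset.mem_filter.2 ⟨Finset.mem_univ _, h k hk⟩
        have := (Finset.card_le_card hsub).trans hfiltercard
        omega
      have hsplit : (if (k0 : ℕ) < L then N else 1) +
          ∑ k ∈ T.erase k0, (if (k : ℕ) < L then N else 1)
          = ∑ k ∈ T, (if (k : ℕ) < L then N else 1) :=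
        Finset.add_sum_erase T (fun k => if (k : ℕ) < L then N else 1) hk0T
      have hk0val : (if (k0 : ℕ) < L then N else 1) = N := if_pos hk0L
      have herasecard : (T.erase k0).card = M := by
        rw [Finset.card_erase_of_mem hk0T, hTcard]; omega
      have herase : (T.erase k0).card ≤ ∑ k ∈ T.erase k0, (if (k : ℕ) < L then N else 1) := by
        refine Finset.card_nsmul_le_sum _ _ 1 (fun k _ => ?_) |>.trans_eq' ?_
        · split <;> omega
        · simp
      omega
    calc (μ (⋂ k ∈ T, E k)).toReal = ∏ k ∈ T, (μ (E k)).toReal := by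
          rw [hprod, ENNReal.toReal_prod]
      _ ≤ ∏ k ∈ T, (A * β ^ (if (k : ℕ) < L then N else 1)) :=
          Finset.prod_le_prod (fun k _ => ENNReal.toReal_nonneg) hfac
      _ = A ^ (M + 1) * β ^ (∑ k ∈ T, (if (k : ℕ) < L then N else 1)) := by
          rw [Finset.prod_mul_distrib, Finset.prod_const, hTcard,
            Finset.prod_pow_eq_pow_sum]
      _ ≤ A ^ (M + 1) * β ^ (M + N) := by
          have := pow_le_pow_of_le_one hβ0.le hβ1 hexp
          exact mul_le_mul_of_nonneg_left this (by positivity)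
  -- assemble
  have hsumne : ∀ T ∈ Psets, μ (⋂ k ∈ T, E k) ≠ ⊤ := fun T _ => measure_ne_top μ _
  calc (μ {ω | M + 1 ≤ {k : Fin (L + M) | X k ω ≤ β}.ncard}).toReal
      ≤ (∑ T ∈ Psets, μ (⋂ k ∈ T, E k)).toReal := by
        refine ENNReal.toReal_mono ?_ ((measure_mono hincl).trans
          (measure_biUnion_finset_le Psets _))
        exact (ENNReal.sum_lt_top.mpr (fun T _ => measure_lt_top μ _)).ne
    _ = ∑ T ∈ Psets, (μ (⋂ k ∈ T, E k)).toReal := ENNReal.toReal_sum hsumne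
    _ ≤ ∑ _T ∈ Psets, A ^ (M + 1) * β ^ (M + N) := Finset.sum_le_sum hTbound
    _ = (((L + M).choose (M + 1)) : ℝ) * (A ^ (M + 1) * β ^ (M + N)) := by
        rw [Finset.sum_const, nsmul_eq_mul, hPsets, Finset.card_powersetCard,
          Finset.card_univ, Fintype.card_fin]
    _ ≤ ((((L + M).choose (M + 1)) : ℝ) * A ^ (M + 1) + 1) * β ^ (M + N) := by
        have hb : (0 : ℝ) ≤ β ^ (M + N) := by positivity
        rw [← mul_assoc]
        exact mul_le_mul_of_nonneg_right (by linarith) hb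
end

section
/- There exists a constant c' > 0 (depending only on L, M, N, c) such that for all β ∈ (0, β₀], P( at least M+1 of the random variables X_1,…,X_{L+M} are ≤ β ) ≥ c' · β^{M+N}. -/
open MeasureTheory ProbabilityTheory

/-- **Matching lower bound for the diversity order `M + N`.** Let
`X 1,…,X (L+M)` be mutually independent, with `P(X k ≤ β) ≥ c β^N` for the
first `L` of them and `P(X k ≤ β) ≥ c β` for the last `M` of them, and
`P(X k ≤ β) ≤ 1/2` for all of them, for all `β ∈ (0, β₀]`. Then there is
`c' > 0` with `P(at least M+1 of the X k are ≤ β) ≥ c' β^(M+N)` for all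
`β ∈ (0, β₀]`. -/
theorem outage_lower_bound
    {Ω : Type*} [MeasurableSpace Ω] (μ : Measure Ω) [IsProbabilityMeasure μ]
    (L M N : ℕ) (hL : 0 < L) (hM : 0 < M) (hN : 0 < N)
    (X : Fin (L + M) → Ω → ℝ) (hmeas : ∀ k, Measurable (X k))
    (hindep : iIndepFun X μ)
    (c β₀ : ℝ) (hc : 0 < c) (hβ₀ : β₀ ∈ Set.Ioc (0 : ℝ) 1)
    (hdir : ∀ k : Fin (L + M), (k : ℕ) < L → ∀ β ∈ Set.Ioc (0 : ℝ) β₀,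
      c * β ^ N ≤ (μ {ω | X k ω ≤ β}).toReal)
    (hrel : ∀ k : Fin (L + M), L ≤ (k : ℕ) → ∀ β ∈ Set.Ioc (0 : ℝ) β₀,
      c * β ≤ (μ {ω | X k ω ≤ β}).toReal)
    (hhalf : ∀ k : Fin (L + M), ∀ β ∈ Set.Ioc (0 : ℝ) β₀,
      (μ {ω | X k ω ≤ β}).toReal ≤ 1 / 2) :
    ∃ c' : ℝ, 0 < c' ∧ ∀ β ∈ Set.Ioc (0 : ℝ) β₀,
      c' * β ^ (M + N) ≤
        (μ {ω | M + 1 ≤ {k : Fin (L + M) | X k ω ≤ β}.ncard}).toReal := by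
  refine ⟨c ^ (M + 1), pow_pos hc _, ?_⟩
  intro β hβ
  have hβpos : 0 < β := hβ.1
  set i0 : Fin (L + M) := ⟨0, by omega⟩ with hi0
  -- the M relay indices
  set T : Finset (Fin (L + M)) :=
    (Finset.univ : Finset (Fin M)).image
      (fun j : Fin M => (⟨L + (j : ℕ), Nat.add_lt_add_left j.isLt L⟩ : Fin (L + M))) with hT
  have hinj : Function.Injective
      (fun j : Fin M => (⟨L + (j : ℕ), Nat.add_lt_add_left j.isLt L⟩ : Fin (L + M))) := by
    intro a b hab
    simp only [Fin.mk.injEq, add_right_inj] at hab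
    exact Fin.ext hab
  have hTL : ∀ k ∈ T, L ≤ (k : ℕ) := by
    intro k hk
    simp only [hT, Finset.mem_image] at hk
    obtain ⟨j, _, rfl⟩ := hk
    simp
  have hi0T : i0 ∉ T := by
    intro h
    have := hTL i0 h
    simp [hi0] at this
    omega
  set S : Finset (Fin (L + M)) := insert i0 T with hS
  have hTcard : T.card = M := by
    rw [hT, Finset.card_image_of_injective _ hinj, Finset.card_univ, Fintype.card_fin]
  have hScard : S.card = M + 1 := by
    rw [hS, Finset.card_insert_of_notMem hi0T, hTcard]
  -- the intersection event
  have hmeasE : ∀ k : Fin (L + M),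
      MeasurableSet[(inferInstance : MeasurableSpace ℝ).comap (X k)]
        {ω | X k ω ≤ β} := by
    intro k
    exact ⟨Set.Iic β, measurableSet_Iic, rfl⟩
  have hprod : μ (⋂ k ∈ S, {ω | X k ω ≤ β}) = ∏ k ∈ S, μ {ω | X k ω ≤ β} :=
    hindep.meas_biInter (fun k _ => hmeasE k)
  -- inclusion into the target event
  have hsub : (⋂ k ∈ S, {ω | X k ω ≤ β}) ⊆
      {ω | M + 1 ≤ {k : Fin (L + M) | X k ω ≤ β}.ncard} := by
    intro ω hω
    simp only [Set.mem_iInter, Set.mem_setOf_eq] at hω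
    have hSsub : (S : Set (Fin (L + M))) ⊆ {k : Fin (L + M) | X k ω ≤ β} := by
      intro k hk
      exact hω k hk
    have : (S : Set (Fin (L + M))).ncard ≤
        {k : Fin (L + M) | X k ω ≤ β}.ncard :=
      Set.ncard_le_ncard hSsub (Set.toFinite _)
    simpa [Set.ncard_coe_finset, hScard] using this
  -- lower bound on the product
  have hmono : μ (⋂ k ∈ S, {ω | X k ω ≤ β}) ≤
      μ {ω | M + 1 ≤ {k : Fin (L + M) | X k ω ≤ β}.ncard} := measure_mono hsub
  have hfin : ∀ s : Set Ω, μ s ≠ ⊤ := fun s => measure_ne_top μ s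
  have htoReal : (μ (⋂ k ∈ S, {ω | X k ω ≤ β})).toReal =
      ∏ k ∈ S, (μ {ω | X k ω ≤ β}).toReal := by
    rw [hprod, ENNReal.toReal_prod]
  have hprodS : c ^ (M + 1) * β ^ (M + N) ≤
      ∏ k ∈ S, (μ {ω | X k ω ≤ β}).toReal := by
    have h1 : ∏ k ∈ S, (μ {ω | X k ω ≤ β}).toReal =
        (μ {ω | X i0 ω ≤ β}).toReal * ∏ k ∈ T, (μ {ω | X k ω ≤ β}).toReal := by
      rw [hS, Finset.prod_insert hi0T]
    rw [h1]
    have h2 : ∏ k ∈ T, (c * β) ≤ ∏ k ∈ T, (μ {ω | X k ω ≤ β}).toReal := by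
      apply Finset.prod_le_prod
      · intro k _; positivity
      · intro k hk; exact hrel k (hTL k hk) β hβ
    have h3 : c * β ^ N ≤ (μ {ω | X i0 ω ≤ β}).toReal :=
      hdir i0 (by simp [hi0]; omega) β hβ
    have h4 : ∏ k ∈ T, (c * β) = (c * β) ^ M := by
      rw [Finset.prod_const, hTcard]
    calc c ^ (M + 1) * β ^ (M + N)
        = (c * β ^ N) * ((c * β) ^ M) := by ring
      _ ≤ (μ {ω | X i0 ω ≤ β}).toReal * ∏ k ∈ T, (μ {ω | X k ω ≤ β}).toReal := by
          apply mul_le_mul h3 (h4 ▸ h2) (by positivity) (ENNReal.toReal_nonneg)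
  calc c ^ (M + 1) * β ^ (M + N)
      ≤ (μ (⋂ k ∈ S, {ω | X k ω ≤ β})).toReal := by rw [htoReal]; exact hprodS
    _ ≤ (μ {ω | M + 1 ≤ {k : Fin (L + M) | X k ω ≤ β}.ncard}).toReal :=
        ENNReal.toReal_mono (hfin _) hmono
end
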